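/- Let k be an algebraically closed field, let X be an integral normal scheme over k whose ring of global sections consists only of constants (i.e., the structure map k → Γ(X, O_X) is bijective), and let h : X' → X be a finite dominant morphism with X' integral. Then the ring of global sections of X' also consists only of constants: the canonical map k → Γ(X', O_{X'}) is bijective. -/

import Mathlib

open AlgebraicGeometry CategoryTheory TopologicalSpace Polynomial TopCat

/-- The ring homomorphism `k → Γ(X, O_X)` induced by a structure morphism
`g : X ⟶ Spec k`. -/
noncomputable def structureMapGamma {k : Type*} [CommRing k] {X : AlgebraicGeometry.Scheme}
    (g : X ⟶ AlgebraicGeometry.Spec (CommRingCat.of k)) : k →+* Γ(X, ⊤) :=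
  ((AlgebraicGeometry.Scheme.ΓSpecIso (CommRingCat.of k)).inv ≫ g.appTop).hom

/-- A dominant morphism of irreducible schemes sends the generic point to the generic point. -/
lemma aux_base_genericPoint {X X' : AlgebraicGeometry.Scheme} [IrreducibleSpace X]
    [IrreducibleSpace X'] (h : X' ⟶ X) [IsDominant h] :
    h.base (genericPoint X') = genericPoint X := by
  refine ((genericPoint_spec X).eq ?_).symm
  have H := (genericPoint_spec X').image (h.base.hom.continuous)
  rwa [Set.image_univ, h.denseRange.closure_range] at H

/-- An element of the function field of an integral scheme lying in every stalk is
the germ of a global section. -/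
lemma aux_glue (X : AlgebraicGeometry.Scheme) [IsIntegral X] (c : X.functionField)
    (hc : ∀ x : X, ∃ d : X.presheaf.stalk x,
      X.presheaf.stalkSpecializes ((genericPoint_spec X).specializes trivial) d = c) :
    ∃ t : Γ(X, ⊤), X.presheaf.germ ⊤ (genericPoint X) trivial t = c := by
  have hW : ∀ x : X, ∃ (W : X.Opens) (hxW : x ∈ W) (t : Γ(X, W)),
      X.presheaf.germ W (genericPoint X)
        (((genericPoint_spec X).specializes trivial).mem_open W.isOpen hxW) t = c := by
    intro x
    obtain ⟨d, hd⟩ := hc x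
    obtain ⟨W, hxW, t, ht⟩ := X.presheaf.germ_exist (x := x) d
    refine ⟨W, hxW, t, ?_⟩
    rw [← hd, ← ht, TopCat.Presheaf.germ_stalkSpecializes_apply]
  choose W hxW t ht using hW
  have hcover : (⊤ : X.Opens) ≤ iSup W := fun p _ => Opens.mem_iSup.mpr ⟨p, hxW p⟩
  have hcomp : TopCat.Presheaf.IsCompatible X.sheaf.1 W t := by
    intro i j
    by_cases hij : Nonempty (↑(W i ⊓ W j) : Type _)
    · haveI := hij
      apply X.germToFunctionField_injective (W i ⊓ W j)
      show X.presheaf.germ _ _ _ (X.presheaf.map _ _) = X.presheaf.germ _ _ _ (X.presheaf.map _ _)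
      rw [TopCat.Presheaf.germ_res_apply, TopCat.Presheaf.germ_res_apply]
      exact (ht i).trans (ht j).symm
    · have hbot : W i ⊓ W j = ⊥ := by
        rw [← Opens.not_nonempty_iff_eq_bot]
        exact fun hne => hij (Set.Nonempty.to_subtype hne)
      haveI : Subsingleton Γ(X, W i ⊓ W j) := by rw [hbot]; infer_instance
      exact @Subsingleton.elim Γ(X, W i ⊓ W j) this _ _
  obtain ⟨s, hs, -⟩ := X.sheaf.existsUnique_gluing' W ⊤ (fun i => homOfLE le_top) hcover t hcomp
  have x0 : X := Nonempty.some inferInstance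
  refine ⟨s, ?_⟩
  have h2 := congrArg (X.presheaf.germ (W x0) (genericPoint X)
    (((genericPoint_spec X).specializes trivial).mem_open (W x0).isOpen (hxW x0))) (hs x0)
  have h3 : X.presheaf.germ (W x0) (genericPoint X)
      (((genericPoint_spec X).specializes trivial).mem_open (W x0).isOpen (hxW x0))
      (X.presheaf.map (homOfLE le_top).op s) = X.presheaf.germ ⊤ (genericPoint X) trivial s :=
    X.presheaf.germ_res_apply (homOfLE le_top) _ _ s
  rw [← h3]
  exact h2.trans (ht x0)

/-- Key algebraic step: if `s'` is a root of a monic polynomial over `K` whose coefficients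
come from an algebraically closed field `k`, then `s'` comes from `k`. -/
lemma aux_alg {k K L : Type*} [Field k] [IsAlgClosed k] [Field K] [CommRing L] [IsDomain L]
    (ψ : k →+* K) (F : K →+* L) (s' : L) (P : K[X]) (hP : P.Monic)
    (hroot : Polynomial.eval₂ F s' P = 0)
    (hcoeff : ∀ n, P.coeff n ∈ Set.range ψ) : ∃ a : k, F (ψ a) = s' := by
  obtain ⟨q, hqmap, -, hq⟩ := Polynomial.lifts_and_degree_eq_and_monic
    ((Polynomial.lifts_iff_coeff_lifts P).mpr hcoeff) hP
  have h0 : Polynomial.eval₂ (F.comp ψ) s' q = 0 := by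
    rw [← hqmap, Polynomial.eval₂_map] at hroot
    exact hroot
  have hq' := (IsAlgClosed.splits q).eq_prod_roots_of_monic hq
  have hprod : (q.roots.map (fun a => s' - F (ψ a))).prod = 0 := by
    have := congrArg (Polynomial.eval₂RingHom (F.comp ψ) s') hq'
    rw [map_multiset_prod, Multiset.map_map] at this
    simp only [coe_eval₂RingHom, Function.comp, Polynomial.eval₂_sub, Polynomial.eval₂_X,
      Polynomial.eval₂_C, RingHom.coe_comp, Function.comp_apply] at this
    rw [← this]
    simpa using h0
  obtain ⟨b, hb, hb0⟩ := Multiset.mem_map.mp (Multiset.prod_eq_zero_iff.mp hprod)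
  exact ⟨b, (sub_eq_zero.mp hb0).symm⟩

/-- Let `k` be an algebraically closed field, `X` an integral normal scheme over `k`
(normal: every stalk of the structure sheaf is an integrally closed domain) with only
constant global sections (the structure map `k → Γ(X, O_X)` is bijective), and let
`h : X' ⟶ X` be a finite dominant morphism with `X'` integral.  Then `X'` also has only
constant global sections: the map `k → Γ(X', O_{X'})` is bijective. -/
theorem global_sections_constant_of_finite_dominant
    {k : Type*} [Field k] [IsAlgClosed k]
    {X X' : AlgebraicGeometry.Scheme} [IsIntegral X] [IsIntegral X']
    (hnormal : ∀ x : X, IsIntegrallyClosed (X.presheaf.stalk x))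
    (g : X ⟶ AlgebraicGeometry.Spec (CommRingCat.of k))
    (hX : Function.Bijective (structureMapGamma g))
    (h : X' ⟶ X) [IsFinite h] [IsDominant h] :
    Function.Bijective (structureMapGamma (h ≫ g)) := by
  classical
  have hgen : h.base (genericPoint X') = genericPoint X := aux_base_genericPoint h
  set φ : k →+* Γ(X, ⊤) := structureMapGamma g with hφdef
  set φ' : k →+* Γ(X', ⊤) := structureMapGamma (h ≫ g) with hφ'def
  have hφ' : ∀ a, φ' a = h.appTop (φ a) := by
    intro a
    show ((AlgebraicGeometry.Scheme.ΓSpecIso (CommRingCat.of k)).inv ≫ (h ≫ g).appTop).hom a = _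
    rw [Scheme.Hom.comp_appTop]
    rfl
  constructor
  · exact φ'.injective
  intro s
  -- the induced map on function fields
  let F : X.functionField ⟶ X'.functionField :=
    X.presheaf.stalkSpecializes ((Inseparable.of_eq hgen).specializes) ≫
      h.stalkMap (genericPoint X')
  -- compatibility of `F` with germs
  have hcompat : ∀ (U : X.Opens) (hξU : genericPoint X ∈ U) (u : Γ(X, U)),
      F (X.presheaf.germ U (genericPoint X) hξU u) =
        X'.presheaf.germ (h ⁻¹ᵁ U) (genericPoint X')
          (show h.base (genericPoint X') ∈ U by rw [hgen]; exact hξU) (h.app U u) := by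
    intro U hξU u
    show h.stalkMap (genericPoint X') (X.presheaf.stalkSpecializes _
      (X.presheaf.germ U _ hξU u)) = _
    rw [TopCat.Presheaf.germ_stalkSpecializes_apply]
    exact Scheme.Hom.germ_stalkMap_apply h U _ _ u
  -- the image of `s` in the function field of `X'`
  set s' : X'.functionField := X'.presheaf.germ ⊤ (genericPoint X') trivial s with hs'def
  -- `s'` is integral over every stalk of `X`
  have hint : ∀ x : X, ∃ q : Polynomial (X.presheaf.stalk x), q.Monic ∧
      Polynomial.eval₂
        (RingHom.comp F.hom
          (X.presheaf.stalkSpecializes ((genericPoint_spec X).specializes trivial)).hom)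
        s' q = 0 := by
    intro x
    let U : X.Opens := (X.affineCover.f (X.affineCover.idx x)).opensRange
    have hU : IsAffineOpen U := isAffineOpen_opensRange _
    have hxU : x ∈ U := X.affineCover.covers x
    have hξU : genericPoint X ∈ U :=
      ((genericPoint_spec X).specializes trivial).mem_open U.isOpen hxU
    have hξ'V : h.base (genericPoint X') ∈ U := by rw [hgen]; exact hξU
    have hfin : (h.app U).hom.Finite := IsFinite.finite_app h U hU
    set sV : Γ(X', h ⁻¹ᵁ U) := X'.presheaf.map (homOfLE le_top).op s with hsV
    obtain ⟨p, hp, hp0⟩ := hfin.to_isIntegral sV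
    refine ⟨p.map (X.presheaf.germ U x hxU).hom, hp.map _, ?_⟩
    rw [Polynomial.eval₂_map]
    have hcomm : (RingHom.comp F.hom (X.presheaf.stalkSpecializes
          ((genericPoint_spec X).specializes trivial)).hom).comp (X.presheaf.germ U x hxU).hom
        = RingHom.comp (X'.presheaf.germ (h ⁻¹ᵁ U) (genericPoint X') hξ'V).hom (h.app U).hom := by
      ext u
      show F (X.presheaf.stalkSpecializes _ (X.presheaf.germ U x hxU u)) = _
      rw [TopCat.Presheaf.germ_stalkSpecializes_apply]
      exact hcompat U hξU u
    rw [hcomm]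
    have hs2 : s' = X'.presheaf.germ (h ⁻¹ᵁ U) (genericPoint X') hξ'V sV := by
      rw [hs'def, hsV]
      exact (X'.presheaf.germ_res_apply (homOfLE le_top) _ _ s).symm
    rw [hs2, ← Polynomial.hom_eval₂, hp0, map_zero]
  -- algebra structure on the function field extension
  letI : Algebra X.functionField X'.functionField := RingHom.toAlgebra F.hom
  have hs'int : IsIntegral X.functionField s' := by
    obtain ⟨x⟩ := (inferInstance : Nonempty X)
    obtain ⟨q, hq, hq0⟩ := hint x
    refine ⟨q.map (X.presheaf.stalkSpecializes ((genericPoint_spec X).specializes trivial)).hom,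
      hq.map _, ?_⟩
    rw [← Polynomial.eval₂_map] at hq0
    exact hq0
  -- coefficients of the minimal polynomial are in every stalk
  have hcoeff : ∀ (n : ℕ) (x : X), ∃ d : X.presheaf.stalk x,
      X.presheaf.stalkSpecializes ((genericPoint_spec X).specializes trivial) d =
        (minpoly X.functionField s').coeff n := by
    intro n x
    obtain ⟨q, hq, hq0⟩ := hint x
    haveI : IsDomain (X.presheaf.stalk x) := by
      have hinj : Function.Injective
          (X.presheaf.stalkSpecializes ((genericPoint_spec X).specializes trivial) :
            X.presheaf.stalk x ⟶ X.functionField) := by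
        rw [RingHom.injective_iff_ker_eq_bot, RingHom.ker_eq_bot_iff_eq_zero]
        intro a ha
        obtain ⟨U, hxU, u, rfl⟩ := X.presheaf.germ_exist (x := x) a
        rw [TopCat.Presheaf.germ_stalkSpecializes_apply] at ha
        haveI : Nonempty U := ⟨⟨x, hxU⟩⟩
        have hu : u = 0 := by
          apply germ_injective_of_isIntegral X (genericPoint X)
            (((genericPoint_spec X).specializes trivial).mem_open U.isOpen hxU)
          rw [ha, map_zero]
        rw [hu, map_zero]
      exact hinj.isDomain _
    letI : Algebra (X.presheaf.stalk x) X'.functionField :=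
      RingHom.toAlgebra (RingHom.comp F.hom
        (X.presheaf.stalkSpecializes ((genericPoint_spec X).specializes trivial)).hom)
    haveI : IsScalarTower (X.presheaf.stalk x) X.functionField X'.functionField :=
      IsScalarTower.of_algebraMap_eq' rfl
    haveI := hnormal x
    have hsx : IsIntegral (X.presheaf.stalk x) s' := ⟨q, hq, hq0⟩
    have heq := minpoly.isIntegrallyClosed_eq_field_fractions' X.functionField hsx
    rw [heq, Polynomial.coeff_map]
    exact ⟨_, rfl⟩
  -- hence the coefficients are constants
  set ψ : k →+* X.functionField :=
    RingHom.comp (X.presheaf.germ ⊤ (genericPoint X) trivial).hom φ with hψdef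
  have hrange : ∀ n, (minpoly X.functionField s').coeff n ∈ Set.range ψ := by
    intro n
    obtain ⟨tn, htn⟩ := aux_glue X ((minpoly X.functionField s').coeff n) (hcoeff n)
    obtain ⟨a, ha⟩ := hX.2 tn
    exact ⟨a, by rw [hψdef, RingHom.comp_apply, ha, htn]⟩
  have hroot : Polynomial.eval₂ F.hom s' (minpoly X.functionField s') = 0 := by
    have := minpoly.aeval X.functionField s'
    rwa [Polynomial.aeval_def] at this
  obtain ⟨a, ha⟩ := aux_alg ψ F.hom s' (minpoly X.functionField s') (minpoly.monic hs'int)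
    hroot hrange
  refine ⟨a, ?_⟩
  apply germ_injective_of_isIntegral X' (genericPoint X') (U := ⊤) trivial
  rw [← hs'def, ← ha, hψdef, RingHom.comp_apply]
  rw [hφ' a]
  exact (hcompat ⊤ trivial (φ a)).symm
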